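/- For all positive integers n and m with n ≤ m, the number N of monotone nondecreasing functions f : Fin n → Fin m satisfies N · 2^(n·⌊log₂ n⌋) ≤ 2^(n·⌈log₂ m⌉ + 2n). Equivalently, a sorted list of n integers from the universe [0, m−1] can be injectively encoded into n·⌈log₂ m⌉ bits in which the last n·⌊log₂ n⌋ − 2n bits are all zero. (This is the information-theoretic content of the paper's Theorem 4, proved via the Elias–Fano encoding: the top ⌊log₂ n⌋ bits of all entries form a nondecreasing sequence over at most n values, which can be encoded in at most 2n bits, while the remaining ⌈log₂ m⌉ − ⌊log₂ n⌋ bits of each entry are arbitrary.) -/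

import Mathlib

/-- Information-theoretic content of Theorem 4 (Elias–Fano): the number `N` of monotone
nondecreasing functions `f : Fin n → Fin m` satisfies
`N * 2^(n * ⌊log₂ n⌋) ≤ 2^(n * ⌈log₂ m⌉ + 2n), i.e. a sorted list of `n` integers from
`[0, m-1]` can be encoded into `n⌈log₂ m⌉` bits whose last `n⌊log₂ n⌋ - 2n` bits are zero. -/
theorem sorted_count_mul_savings_le
    (n m : ℕ) (hn : 0 < n) (hm : 0 < m) (hnm : n ≤ m) :
    Nat.card {f : Fin n → Fin m // Monotone f} * 2 ^ (n * Nat.log 2 n) ≤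
      2 ^ (n * Nat.clog 2 m + 2 * n) := by
  set L := Nat.log 2 n with hL
  set k := Nat.clog 2 m with hk
  have hLk : L ≤ k := (Nat.log_mono_right hnm).trans (Nat.log_le_clog 2 m)
  have hA : 2 ^ L ≤ n := Nat.pow_log_le_self 2 hn.ne'
  have hB : 0 < 2 ^ (k - L) := Nat.pow_pos (by norm_num)
  have hmAB : m ≤ 2 ^ (k - L) * 2 ^ L := by
    rw [← pow_add, Nat.sub_add_cancel hLk]
    exact Nat.le_pow_clog (by norm_num) m
  -- the Elias–Fano injection
  set B := 2 ^ (k - L) with hBdef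
  have key : ∀ f : {f : Fin n → Fin m // Monotone f}, ∀ i : Fin n,
      (f.1 i : ℕ) / B + (i : ℕ) < n + 2 ^ L := by
    intro f i
    have h1 : (f.1 i : ℕ) / B < 2 ^ L := by
      apply Nat.div_lt_of_lt_mul
      exact lt_of_lt_of_le (f.1 i).2 hmAB
    omega
  let Φ : {f : Fin n → Fin m // Monotone f} →
      Finset (Fin (n + 2 ^ L)) × (Fin n → Fin B) := fun f =>
    (Finset.univ.image (fun i : Fin n => (⟨(f.1 i : ℕ) / B + i, key f i⟩ : Fin (n + 2 ^ L))),
     fun i => ⟨(f.1 i : ℕ) % B, Nat.mod_lt _ hB⟩)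
  have hΦ : Function.Injective Φ := by
    intro f g hfg
    obtain ⟨h1, h2⟩ := Prod.mk.injEq .. ▸ hfg
    have hsm : ∀ h : {f : Fin n → Fin m // Monotone f},
        StrictMono (fun i : Fin n => (⟨(h.1 i : ℕ) / B + i, key h i⟩ : Fin (n + 2 ^ L))) := by
      intro h i j hij
      have : (h.1 i : ℕ) ≤ h.1 j := h.2 hij.le
      have : (h.1 i : ℕ) / B ≤ (h.1 j : ℕ) / B := Nat.div_le_div_right this
      simp only [Fin.mk_lt_mk]
      have : (i : ℕ) < j := hij
      omega
    have hrange : (fun i : Fin n => (⟨(f.1 i : ℕ) / B + i, key f i⟩ : Fin (n + 2 ^ L)))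
        = fun i : Fin n => (⟨(g.1 i : ℕ) / B + i, key g i⟩ : Fin (n + 2 ^ L)) := by
      haveI : WellFoundedLT (Fin n) := Finite.to_wellFoundedLT
      rw [← StrictMono.range_inj (hsm f) (hsm g)]
      have := congrArg (fun s : Finset (Fin (n + 2 ^ L)) => (s : Set (Fin (n + 2 ^ L)))) h1
      simpa [Set.image_univ] using this
    ext i
    have hdiv : (f.1 i : ℕ) / B + (i : ℕ) = (g.1 i : ℕ) / B + (i : ℕ) :=
      congrArg Fin.val (congrFun hrange i)
    have hmod : (f.1 i : ℕ) % B = (g.1 i : ℕ) % B :=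
      congrArg Fin.val (congrFun h2 i)
    have h7 : (f.1 i : ℕ) / B = (g.1 i : ℕ) / B := by omega
    rw [← Nat.div_add_mod ((f.1 i : ℕ)) B, ← Nat.div_add_mod ((g.1 i : ℕ)) B, h7, hmod]
  have hcard : Nat.card {f : Fin n → Fin m // Monotone f} ≤
      2 ^ (n + 2 ^ L) * B ^ n := by
    have := Nat.card_le_card_of_injective Φ hΦ
    simpa [Nat.card_eq_fintype_card, Fintype.card_prod, Fintype.card_finset,
      Fintype.card_fun, Fintype.card_fin] using this
  calc Nat.card {f : Fin n → Fin m // Monotone f} * 2 ^ (n * L)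
      ≤ (2 ^ (n + 2 ^ L) * B ^ n) * 2 ^ (n * L) := by
        exact Nat.mul_le_mul_right _ hcard
    _ = 2 ^ (n + 2 ^ L + (k - L) * n + n * L) := by
        rw [hBdef, ← pow_mul, ← pow_add, ← pow_add]
    _ ≤ 2 ^ (n * k + 2 * n) := by
        apply Nat.pow_le_pow_right (by norm_num)
        have h9 : (k - L) * n + n * L = n * k := by
          have h10 : L * n ≤ k * n := Nat.mul_le_mul_right n hLk
          rw [Nat.sub_mul, mul_comm n L, mul_comm n k]
          omega
        omega
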